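/- arXiv:2304.07416 — 2 statements merged into one kernel-verified Lean document; each statement's English description precedes it below -/
import Mathlib

section
/- For a Banach sublattice F of a Banach lattice E, the absolute weak topology |σ|(F,F*) on F coincides with the subspace topology induced on F by the absolute weak topology |σ|(E,E*) of E. -/
set_option linter.unusedSectionVars false

open Filter Topology Pointwise MeasureTheory


section Defs

variable {E : Type*} [NormedAddCommGroup E] [Lattice E] [HasSolidNorm E] [IsOrderedAddMonoid E] [NormedSpace ℝ E]

/-- The pseudometric on a Banach lattice induced by a positive continuous linear functional `f`,
given by `dist x y = f |x - y|`. -/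
noncomputable def absSeminormDist (f : E →L[ℝ] ℝ) (hf : ∀ x : E, 0 ≤ x → 0 ≤ f x) :
    PseudoMetricSpace E where
  dist x y := f |x - y|
  dist_self x := by simp
  dist_comm x y := by simp [abs_sub_comm]
  dist_triangle x y z := by
    have h1 : |x - z| ≤ |x - y| + |y - z| := by
      calc |x - z| = |(x - y) + (y - z)| := by abel_nf
      _ ≤ |x - y| + |y - z| := abs_add_le _ _
    have h2 := hf (|x - y| + |y - z| - |x - z|) (sub_nonneg.mpr h1)
    simp only [map_sub, map_add] at h2
    try dsimp
    linarith

/-- The absolute weak topology `|σ|(E, E*)` on a Banach lattice `E`: the topology generated by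
the lattice seminorms `x ↦ |x*|(|x|) = x*(|x|)`, for `x*` ranging over the positive continuous
linear functionals on `E`. -/
noncomputable def absWeakTopology (E : Type*) [NormedAddCommGroup E] [Lattice E] [HasSolidNorm E] [IsOrderedAddMonoid E] [NormedSpace ℝ E] :
    TopologicalSpace E :=
  ⨅ f : {f : E →L[ℝ] ℝ // ∀ x : E, 0 ≤ x → 0 ≤ f x},
    (absSeminormDist f.1 f.2).toUniformSpace.toTopologicalSpace

end Defs

section Aux

variable {E F : Type*} [NormedAddCommGroup E] [Lattice E] [HasSolidNorm E] [IsOrderedAddMonoid E] [NormedSpace ℝ E] [PosSMulStrictMono ℝ E]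
  [NormedAddCommGroup F] [Lattice F] [HasSolidNorm F] [IsOrderedAddMonoid F] [NormedSpace ℝ F] [PosSMulStrictMono ℝ F]

/-- A lattice embedding preserves positive parts. -/
lemma map_posPart_of_map_abs (T : F →ₗ[ℝ] E) (hlat : ∀ y : F, T |y| = |T y|) (y : F) :
    T y⁺ = (T y)⁺ := by
  have h2 : (2 : ℝ) • T y⁺ = (2 : ℝ) • (T y)⁺ := by
    have hF : (2 : ℝ) • y⁺ = |y| + y := by
      rw [two_smul]
      have := posPart_add_negPart y
      have := posPart_sub_negPart y
      have habs : y⁺ + y⁺ = (y⁺ + y⁻) + (y⁺ - y⁻) := by abel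
      rw [habs, posPart_add_negPart, posPart_sub_negPart]
    have hE : (2 : ℝ) • (T y)⁺ = |T y| + T y := by
      rw [two_smul]
      have habs : (T y)⁺ + (T y)⁺ = ((T y)⁺ + (T y)⁻) + ((T y)⁺ - (T y)⁻) := by abel
      rw [habs, posPart_add_negPart, posPart_sub_negPart]
    rw [← LinearMap.map_smul, hF, map_add, hlat, hE]
  exact smul_right_injective E two_ne_zero h2

/-- Positive Hahn–Banach extension along an isometric lattice embedding. -/
lemma exists_pos_extension (T : F →ₗ[ℝ] E) (hisom : ∀ y : F, ‖T y‖ = ‖y‖)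
    (hlat : ∀ y : F, T |y| = |T y|) (g : F →L[ℝ] ℝ) (hg : ∀ y : F, 0 ≤ y → 0 ≤ g y) :
    ∃ f : E →L[ℝ] ℝ, (∀ x : E, 0 ≤ x → 0 ≤ f x) ∧ ∀ y : F, f (T y) = g y := by
  have hinj : Function.Injective T := by
    intro a b h
    have h1 := hisom (a - b)
    rw [map_sub, h, sub_self, norm_zero] at h1
    exact sub_eq_zero.mp (norm_eq_zero.mp h1.symm)
  set eT := LinearEquiv.ofInjective T hinj with heT
  set h : LinearMap.range T →ₗ[ℝ] ℝ := g.toLinearMap ∘ₗ eT.symm.toLinearMap with hh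
  set N : E → ℝ := fun x => ‖g‖ * ‖x⁺‖ with hN
  have N_hom : ∀ c : ℝ, 0 < c → ∀ x, N (c • x) = c * N x := by
    intro c hc x
    have : (c • x)⁺ = c • x⁺ := by
      have hmap := (OrderIso.smulRight (β := E) hc).map_sup x 0
      simp only [OrderIso.smulRight_apply] at hmap
      rw [posPart_def, posPart_def, hmap, smul_zero]
    simp [hN, this, norm_smul, abs_of_pos hc]
    ring
  have N_add : ∀ x y : E, N (x + y) ≤ N x + N y := by
    intro x y
    have h1 : (x + y)⁺ ≤ x⁺ + y⁺ := by
      rw [posPart_def, posPart_def, posPart_def]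
      refine sup_le ?_ (add_nonneg (posPart_nonneg _) (posPart_nonneg _))
      exact add_le_add le_sup_left le_sup_left
    have h2 : ‖(x + y)⁺‖ ≤ ‖x⁺ + y⁺‖ := by
      apply norm_le_norm_of_abs_le_abs
      rw [abs_of_nonneg (posPart_nonneg _), abs_of_nonneg (add_nonneg (posPart_nonneg _) (posPart_nonneg _))]
      exact h1
    have h3 : ‖(x + y)⁺‖ ≤ ‖x⁺‖ + ‖y⁺‖ := h2.trans (norm_add_le _ _)
    calc N (x + y) = ‖g‖ * ‖(x + y)⁺‖ := rfl
    _ ≤ ‖g‖ * (‖x⁺‖ + ‖y⁺‖) := by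
        exact mul_le_mul_of_nonneg_left h3 (norm_nonneg g)
    _ = N x + N y := by rw [hN]; ring
  have hval : ∀ y : F, h ⟨T y, ⟨y, rfl⟩⟩ = g y := by
    intro y
    have hsymm : eT.symm ⟨T y, ⟨y, rfl⟩⟩ = y := by
      have : (⟨T y, ⟨y, rfl⟩⟩ : LinearMap.range T) = eT y := rfl
      rw [this, heT, LinearEquiv.symm_apply_apply]
    rw [hh]; simp [hsymm]
  have hdom : ∀ x : (LinearMap.range T), h x ≤ N x := by
    rintro ⟨x, y, rfl⟩
    rw [hval y]
    have h1 : g y ≤ g y⁺ := by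
      have := hg (y⁺ - y) (sub_nonneg.mpr (le_posPart y))
      rw [map_sub] at this
      linarith
    have h2 : g y⁺ ≤ ‖g‖ * ‖y⁺‖ := (le_abs_self _).trans (g.le_opNorm _)
    have h3 : ‖y⁺‖ = ‖(T y)⁺‖ := by
      rw [← map_posPart_of_map_abs T hlat, hisom]
    calc g y ≤ ‖g‖ * ‖y⁺‖ := h1.trans h2
    _ = N (T y) := by rw [hN, h3]
  obtain ⟨f0, hf0eq, hf0le⟩ :=
    exists_extension_of_le_sublinear ⟨LinearMap.range T, h⟩ N N_hom N_add hdom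
  have hbound : ∀ x : E, |f0 x| ≤ ‖g‖ * ‖x‖ := by
    intro x
    have hp : ∀ z : E, f0 z ≤ ‖g‖ * ‖z‖ := by
      intro z
      refine (hf0le z).trans (mul_le_mul_of_nonneg_left ?_ (norm_nonneg g))
      apply norm_le_norm_of_abs_le_abs
      rw [abs_of_nonneg (posPart_nonneg _), posPart_def]
      exact sup_le (le_abs_self z) (abs_nonneg z)
    rw [abs_le]
    constructor
    · have := hp (-x)
      rw [map_neg, norm_neg] at this
      linarith
    · exact hp x
  refine ⟨f0.mkContinuous ‖g‖ (fun x => by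
    rw [Real.norm_eq_abs]
    exact (hbound x).trans (mul_le_mul_of_nonneg_left le_rfl (norm_nonneg g))), ?_, ?_⟩
  · intro x hx
    have h1 := hf0le (-x)
    have h2 : (-x)⁺ = (0 : E) := posPart_eq_zero.mpr (neg_nonpos.mpr hx)
    rw [map_neg] at h1
    have h3 : N (-x) = 0 := by rw [hN]; simp [h2]
    rw [h3] at h1
    simpa using neg_nonpos.mp h1
  · intro y
    have := hf0eq ⟨T y, ⟨y, rfl⟩⟩
    simpa [hval y] using this

end Aux

/-- For a Banach sublattice `F` of a Banach lattice `E` (realized as the image of an isometric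
lattice embedding `T : F → E`), the absolute weak topology of `F` coincides with the topology
induced by the absolute weak topology of `E`. -/
theorem absWeakTopology_sublattice {E F : Type*} [NormedAddCommGroup E] [Lattice E] [HasSolidNorm E] [IsOrderedAddMonoid E] [NormedSpace ℝ E] [PosSMulStrictMono ℝ E] [CompleteSpace E]
    [NormedAddCommGroup F] [Lattice F] [HasSolidNorm F] [IsOrderedAddMonoid F] [NormedSpace ℝ F] [PosSMulStrictMono ℝ F] [CompleteSpace F]
    (T : F →ₗ[ℝ] E) (hisom : ∀ y : F, ‖T y‖ = ‖y‖) (hlat : ∀ y : F, T |y| = |T y|) :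
    absWeakTopology F = TopologicalSpace.induced T (absWeakTopology E) := by
  have hpos : ∀ y : F, 0 ≤ y → 0 ≤ T y := by
    intro y hy
    have h := hlat y
    rw [abs_of_nonneg hy] at h
    rw [h]
    exact abs_nonneg _
  let Tc : F →L[ℝ] E := T.mkContinuous 1 (fun y => by rw [one_mul, hisom])
  have hTc : ∀ y : F, Tc y = T y := fun y => rfl
  have key : ∀ (f : {f : E →L[ℝ] ℝ // ∀ x : E, 0 ≤ x → 0 ≤ f x}),
      TopologicalSpace.induced T ((absSeminormDist f.1 f.2).toUniformSpace.toTopologicalSpace)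
        = (absSeminormDist (f.1.comp Tc)
            (fun y hy => f.2 _ (hpos y hy))).toUniformSpace.toTopologicalSpace := by
    intro f
    have hm : PseudoMetricSpace.induced T (absSeminormDist f.1 f.2)
        = absSeminormDist (f.1.comp Tc) (fun y hy => f.2 _ (hpos y hy)) := by
      apply PseudoMetricSpace.ext
      have : ∀ y y' : F, f.1 |T y - T y'| = (f.1.comp Tc) |y - y'| := by
        intro y y'
        rw [ContinuousLinearMap.comp_apply, hTc, hlat, map_sub]
      exact congrArg Dist.mk (funext fun y => funext fun y' => this y y')
    calc TopologicalSpace.induced T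
          ((absSeminormDist f.1 f.2).toUniformSpace.toTopologicalSpace)
        = (PseudoMetricSpace.induced T
            (absSeminormDist f.1 f.2)).toUniformSpace.toTopologicalSpace :=
          (UniformSpace.toTopologicalSpace_comap).symm
    _ = _ := by rw [hm]
  rw [absWeakTopology, absWeakTopology, induced_iInf]
  simp only [key]
  apply le_antisymm
  · exact le_iInf fun f =>
      iInf_le (fun g : {g : F →L[ℝ] ℝ // ∀ y : F, 0 ≤ y → 0 ≤ g y} =>
          (absSeminormDist g.1 g.2).toUniformSpace.toTopologicalSpace)
        ⟨f.1.comp Tc, fun y hy => f.2 _ (hpos y hy)⟩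
  · refine le_iInf fun g => ?_
    obtain ⟨f, hfpos, hfeq⟩ := exists_pos_extension T hisom hlat g.1 g.2
    refine iInf_le_of_le ⟨f, hfpos⟩ (le_of_eq ?_)
    have hm : absSeminormDist (f.comp Tc) (fun y hy => hfpos _ (hpos y hy))
        = absSeminormDist g.1 g.2 := by
      apply PseudoMetricSpace.ext
      have : ∀ y y' : F, (f.comp Tc) |y - y'| = g.1 |y - y'| := by
        intro y y'
        rw [ContinuousLinearMap.comp_apply, hTc, hfeq]
      exact congrArg Dist.mk (funext fun y => funext fun y' => this y y')
    rw [hm]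
end

section
/- The set K = {r_n : n ∈ ℕ} ∪ {0}, where (r_n) are the Rademacher functions in L¹[0,1], is weakly compact but not absolutely weakly sequentially compact. -/
set_option linter.unusedSectionVars false

open Filter Topology Pointwise MeasureTheory


/-- The weak topology `σ(X, X*)` on a Banach space `X`. -/
noncomputable def weakTopology (X : Type*) [NormedAddCommGroup X] [NormedSpace ℝ X] :
    TopologicalSpace X :=
  TopologicalSpace.induced (fun x => fun f : X →L[ℝ] ℝ => f x) Pi.topologicalSpace

noncomputable def Rad (n : ℕ) (t : ℝ) : ℝ := Real.sign (Real.sin (2 ^ n * Real.pi * t))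

lemma measurable_real_sign : Measurable Real.sign := by
  have : Real.sign = fun r : ℝ => if r < 0 then (-1:ℝ) else if 0 < r then 1 else 0 := by
    funext r; rfl
  rw [this]
  exact Measurable.ite (measurableSet_lt measurable_id measurable_const)
    measurable_const (Measurable.ite (measurableSet_lt measurable_const measurable_id)
      measurable_const measurable_const)

lemma abs_sign_le (x : ℝ) : |Real.sign x| ≤ 1 := by
  rcases Real.sign_apply_eq x with h | h | h <;> rw [h] <;> norm_num

lemma Rad_measurable (n : ℕ) : Measurable (Rad n) := by
  exact measurable_real_sign.comp ((measurable_const.mul measurable_id).sin)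

lemma Rad_abs_le (n : ℕ) (t : ℝ) : |Rad n t| ≤ 1 := abs_sign_le _

lemma Rad_intervalIntegrable (n : ℕ) (a b : ℝ) : IntervalIntegrable (Rad n) volume a b := by
  apply IntervalIntegrable.mono_fun (intervalIntegrable_const (c := (1:ℝ)))
    (Rad_measurable n).aestronglyMeasurable
  refine ae_of_all _ fun t => ?_
  simpa [Real.norm_eq_abs] using Rad_abs_le n t

lemma Rad_antiperiod (n : ℕ) (t : ℝ) : Rad n (t + ((2:ℝ)^n)⁻¹) = - Rad n t := by
  have h : (2:ℝ)^n * Real.pi * (t + ((2:ℝ)^n)⁻¹) = 2^n * Real.pi * t + Real.pi := by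
    have : ((2:ℝ)^n) ≠ 0 := by positivity
    field_simp
  rw [Rad, h, Real.sin_add_pi, Real.sign_neg]; rfl

lemma Rad_integral_period (n : ℕ) (a : ℝ) :
    ∫ t in a..(a + 2*((2:ℝ)^n)⁻¹), Rad n t = 0 := by
  set p : ℝ := ((2:ℝ)^n)⁻¹ with hp
  have h1 : ∫ t in (a+p)..(a + 2*p), Rad n t = ∫ t in a..(a+p), Rad n (t + p) := by
    rw [intervalIntegral.integral_comp_add_right (fun t => Rad n t) p]
    ring_nf
  have h2 : ∫ t in a..(a+p), Rad n (t + p) = - ∫ t in a..(a+p), Rad n t := by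
    rw [← intervalIntegral.integral_neg]
    congr 1; funext t; rw [Rad_antiperiod]
  have h3 := intervalIntegral.integral_add_adjacent_intervals
    (Rad_intervalIntegrable n a (a+p)) (Rad_intervalIntegrable n (a+p) (a+2*p))
  rw [← h3, h1, h2]; ring

lemma Rad_integral_periods (n : ℕ) (k : ℕ) (a : ℝ) :
    ∫ t in a..(a + k*(2*((2:ℝ)^n)⁻¹)), Rad n t = 0 := by
  induction k generalizing a with
  | zero => simp
  | succ k ih =>
    have he : a + (k+1:ℕ)*(2*((2:ℝ)^n)⁻¹) = (a + k*(2*((2:ℝ)^n)⁻¹)) + 2*((2:ℝ)^n)⁻¹ := by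
      push_cast; ring
    rw [he, ← intervalIntegral.integral_add_adjacent_intervals
      (Rad_intervalIntegrable n a (a + k*(2*((2:ℝ)^n)⁻¹)))
      (Rad_intervalIntegrable n (a + k*(2*((2:ℝ)^n)⁻¹)) ((a + k*(2*((2:ℝ)^n)⁻¹)) + 2*((2:ℝ)^n)⁻¹)),
      ih a, Rad_integral_period n]; ring

lemma Rad_on_dyadic (m : ℕ) (j : ℕ) {t : ℝ}
    (ht : t ∈ Set.Ioo ((j:ℝ)/2^m) ((j+1:ℝ)/2^m)) : Rad m t = (-1)^j := by
  have h2m : (0:ℝ) < 2^m := by positivity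
  set x : ℝ := 2^m * Real.pi * t with hx
  have hx1 : (j:ℝ) * Real.pi < x := by
    have := ht.1
    have : (j:ℝ) < 2^m * t := by
      rw [div_lt_iff₀ h2m] at this; linarith [this]
    nlinarith [Real.pi_pos]
  have hx2 : x < ((j:ℝ)+1) * Real.pi := by
    have := ht.2
    have : 2^m * t < (j:ℝ)+1 := by
      rw [lt_div_iff₀ h2m] at this; linarith [this]
    nlinarith [Real.pi_pos]
  have hsin : Real.sin x = (-1)^j * Real.sin (x - j * Real.pi) := by
    have := Real.sin_add_int_mul_pi (x - j * Real.pi) (j:ℤ)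
    push_cast at this
    simp only [sub_add_cancel] at this
    rw [this, zpow_natCast]
  have hpos : 0 < Real.sin (x - j * Real.pi) :=
    Real.sin_pos_of_pos_of_lt_pi (by linarith) (by linarith)
  rw [Rad, ← hx, hsin]
  rcases Nat.even_or_odd j with hj | hj
  · rw [hj.neg_one_pow, one_mul, Real.sign_of_pos hpos]
  · rw [hj.neg_one_pow, neg_one_mul, Real.sign_neg, Real.sign_of_pos hpos]

lemma RadMul_intervalIntegrable (n m : ℕ) (a b : ℝ) :
    IntervalIntegrable (fun t => Rad n t * Rad m t) volume a b := by
  apply IntervalIntegrable.mono_fun (intervalIntegrable_const (c := (1:ℝ)))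
    ((Rad_measurable n).mul (Rad_measurable m)).aestronglyMeasurable
  refine ae_of_all _ fun t => ?_
  have h1 := Rad_abs_le n t; have h2 := Rad_abs_le m t
  simp only [Real.norm_eq_abs, Pi.mul_apply, abs_mul, norm_one]
  nlinarith [abs_nonneg (Rad n t), abs_nonneg (Rad m t)]

lemma Rad_piece (m n j : ℕ) (h : m < n) :
    ∫ t in ((j:ℝ)/2^m)..((j+1:ℝ)/2^m), Rad n t * Rad m t = 0 := by
  have h2m : (0:ℝ) < 2^m := by positivity
  have hab : ((j:ℝ)/2^m) ≤ ((j+1:ℝ)/2^m) := by gcongr; linarith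
  have hae : ∀ᵐ t : ℝ ∂volume, t ∈ Set.uIoc ((j:ℝ)/2^m) ((j+1:ℝ)/2^m) →
      Rad n t * Rad m t = (-1)^j * Rad n t := by
    have hb : ∀ᵐ t : ℝ ∂volume, t ≠ ((j+1:ℝ)/2^m) := by
      rw [ae_iff]
      simpa using measure_singleton (μ := (volume : Measure ℝ)) (((j:ℝ)+1)/2^m)
    filter_upwards [hb] with t htb hmem
    rw [Set.uIoc_of_le hab] at hmem
    have htoo : t ∈ Set.Ioo ((j:ℝ)/2^m) ((j+1:ℝ)/2^m) := ⟨hmem.1, lt_of_le_of_ne hmem.2 htb⟩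
    rw [Rad_on_dyadic m j htoo]; ring
  rw [intervalIntegral.integral_congr_ae hae, intervalIntegral.integral_const_mul]
  obtain ⟨d, rfl⟩ : ∃ d, n = m + 1 + d := ⟨n - m - 1, by omega⟩
  have key : ((j+1:ℝ)/2^m) = (j:ℝ)/2^m + ((2^d : ℕ) : ℝ) * (2*((2:ℝ)^(m+1+d))⁻¹) := by
    have hpow : ((2:ℝ)^(m+1+d)) = 2^m * 2 * 2^d := by rw [pow_add, pow_add]; ring
    have h2d : (0:ℝ) < 2^d := by positivity
    push_cast
    rw [hpow]
    field_simp
  rw [key, Rad_integral_periods, mul_zero]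

lemma Rad_orth {m n : ℕ} (h : m < n) : ∫ t in (0:ℝ)..1, Rad n t * Rad m t = 0 := by
  have hsum := intervalIntegral.sum_integral_adjacent_intervals
    (a := fun j : ℕ => (j:ℝ)/2^m) (n := 2^m) (f := fun t => Rad n t * Rad m t)
    (fun k _ => by push_cast; exact RadMul_intervalIntegrable n m _ _)
  have h0 : ((0:ℕ):ℝ)/2^m = (0:ℝ) := by norm_num
  have h1 : (((2^m:ℕ)):ℝ)/2^m = (1:ℝ) := by
    have : ((2:ℝ)^m) ≠ 0 := by positivity
    push_cast; field_simp
  rw [h0, h1] at hsum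
  rw [← hsum]
  apply Finset.sum_eq_zero
  intro j _
  have := Rad_piece m n j h
  push_cast
  push_cast at this
  exact this

lemma sin_ne_zero_ae (n : ℕ) : ∀ᵐ t : ℝ ∂volume, Real.sin (2^n * Real.pi * t) ≠ 0 := by
  have hc : ((2:ℝ)^n * Real.pi) ≠ 0 := by positivity
  rw [ae_iff]
  refine measure_mono_null (fun t ht => ?_)
    ((Set.countable_range (fun k : ℤ => ((k:ℝ) * Real.pi) / (2^n * Real.pi))).measure_zero _)
  simp only [Set.mem_setOf_eq, not_not] at ht
  obtain ⟨k, hk⟩ := Real.sin_eq_zero_iff.mp ht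
  exact ⟨k, by simp only []; rw [hk, mul_div_cancel_left₀ _ hc]⟩

lemma Rad_sq_ae (n : ℕ) : ∀ᵐ t : ℝ ∂volume, Rad n t * Rad n t = 1 := by
  filter_upwards [sin_ne_zero_ae n] with t ht
  rcases Real.sign_apply_eq_of_ne_zero _ ht with h | h <;> rw [Rad, h] <;> norm_num

lemma Rad_abs_ae (n : ℕ) : ∀ᵐ t : ℝ ∂volume, |Rad n t| = 1 := by
  filter_upwards [sin_ne_zero_ae n] with t ht
  rcases Real.sign_apply_eq_of_ne_zero _ ht with h | h <;> rw [Rad, h] <;> norm_num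

lemma Rad_abs_diff_ae {n m : ℕ} : ∀ᵐ t : ℝ ∂volume,
    |Rad n t - Rad m t| = 1 - Rad n t * Rad m t := by
  filter_upwards [sin_ne_zero_ae n, sin_ne_zero_ae m] with t h1 h2
  rcases Real.sign_apply_eq_of_ne_zero _ h1 with h | h <;>
    rcases Real.sign_apply_eq_of_ne_zero _ h2 with h' | h' <;>
    rw [Rad, Rad, h, h'] <;> norm_num

lemma Rad_self_integral (n : ℕ) : ∫ t in (0:ℝ)..1, Rad n t * Rad n t = 1 := by
  rw [intervalIntegral.integral_congr_ae
    (by filter_upwards [Rad_sq_ae n] with t ht _ ; exact ht :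
      ∀ᵐ t : ℝ ∂volume, t ∈ Set.uIoc (0:ℝ) 1 → Rad n t * Rad n t = 1)]
  simp

lemma Rad_abs_integral (n : ℕ) : ∫ t in (0:ℝ)..1, |Rad n t| = 1 := by
  rw [intervalIntegral.integral_congr_ae
    (by filter_upwards [Rad_abs_ae n] with t ht _ ; exact ht :
      ∀ᵐ t : ℝ ∂volume, t ∈ Set.uIoc (0:ℝ) 1 → |Rad n t| = 1)]
  simp

lemma Rad_abs_diff_integral {n m : ℕ} (h : m < n) :
    ∫ t in (0:ℝ)..1, |Rad n t - Rad m t| = 1 := by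
  rw [intervalIntegral.integral_congr_ae
    (by filter_upwards [Rad_abs_diff_ae (n := n) (m := m)] with t ht _ ; exact ht :
      ∀ᵐ t : ℝ ∂volume, t ∈ Set.uIoc (0:ℝ) 1 → |Rad n t - Rad m t| = 1 - Rad n t * Rad m t)]
  rw [intervalIntegral.integral_sub intervalIntegrable_const (RadMul_intervalIntegrable n m 0 1),
    Rad_orth h]
  simp

noncomputable abbrev μ01 : Measure ℝ := volume.restrict (Set.Icc (0:ℝ) 1)

instance : IsProbabilityMeasure μ01 :=
  ⟨by rw [Measure.restrict_apply_univ, Real.volume_Icc]; norm_num⟩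

lemma integral_mu (f : ℝ → ℝ) : ∫ t, f t ∂μ01 = ∫ t in (0:ℝ)..1, f t := by
  rw [intervalIntegral.integral_of_le zero_le_one]
  exact integral_Icc_eq_integral_Ioc

lemma integrable_mu {f : ℝ → ℝ} (hm : Measurable f) (C : ℝ) (hb : ∀ t, |f t| ≤ C) :
    Integrable f μ01 :=
  (integrable_const C).mono' hm.aestronglyMeasurable (ae_of_all _ fun t => by
    simpa [Real.norm_eq_abs] using hb t)

lemma Rad_inner (n m : ℕ) :
    ∫ t, Rad n t * Rad m t ∂μ01 = if n = m then 1 else 0 := by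
  rcases lt_trichotomy n m with h | h | h
  · rw [if_neg h.ne, integral_mu]
    have := Rad_orth h
    rw [← this]
    congr 1; funext t; ring
  · rw [if_pos h, h, integral_mu, Rad_self_integral]
  · rw [if_neg h.ne', integral_mu, Rad_orth h]

lemma Rad_norm_one (n : ℕ) : ∫ t, |Rad n t| ∂μ01 = 1 := by
  rw [integral_mu, Rad_abs_integral]

lemma Rad_dist_one {n m : ℕ} (h : n ≠ m) : ∫ t, |Rad n t - Rad m t| ∂μ01 = 1 := by
  rcases h.lt_or_gt with h | h
  · rw [integral_mu]
    rw [show (fun t => |Rad n t - Rad m t|) = fun t => |Rad m t - Rad n t| from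
      funext fun t => abs_sub_comm _ _]
    exact Rad_abs_diff_integral h
  · rw [integral_mu]; exact Rad_abs_diff_integral h

lemma cauchy_schwarz_mu {g : ℝ → ℝ} (hm : Measurable g) (C : ℝ) (hb : ∀ t, |g t| ≤ C) :
    ∫ t, |g t| ∂μ01 ≤ Real.sqrt (∫ t, g t ^ 2 ∂μ01) := by
  have hconj : Real.HolderConjugate 2 2 := ⟨by norm_num, by norm_num, by norm_num⟩
  have habs : AEStronglyMeasurable (fun t => |g t|) μ01 :=
    (hm.abs).aestronglyMeasurable
  have hmem : MemLp (fun t => |g t|) (ENNReal.ofReal 2) μ01 :=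
    MemLp.of_bound habs C (ae_of_all _ fun t => by
      simpa [Real.norm_eq_abs, abs_abs] using hb t)
  have hone : MemLp (fun _ : ℝ => (1:ℝ)) (ENNReal.ofReal 2) μ01 :=
    memLp_const 1
  have h := integral_mul_le_Lp_mul_Lq_of_nonneg hconj
    (ae_of_all _ fun t => abs_nonneg (g t)) (ae_of_all _ fun _ => zero_le_one) hmem hone
  simp only [mul_one, Real.one_rpow] at h
  have h1 : ∫ _t, (1:ℝ) ∂μ01 = 1 := by simp
  rw [h1] at h
  have h2 : ∫ t, |g t| ^ (2:ℝ) ∂μ01 = ∫ t, g t ^ 2 ∂μ01 := by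
    congr 1; funext t
    rw [show ((2:ℝ)) = ((2:ℕ):ℝ) by norm_num, Real.rpow_natCast, sq_abs]
  rw [h2] at h
  calc ∫ t, |g t| ∂μ01 ≤ (∫ t, g t ^ 2 ∂μ01) ^ (1/2 : ℝ) * 1 ^ (1/2 : ℝ) := h
    _ = Real.sqrt (∫ t, g t ^ 2 ∂μ01) := by
        rw [Real.one_rpow, mul_one, Real.sqrt_eq_rpow]

section Main
variable {r : ℕ → Lp ℝ 1 μ01} (hr : ∀ n : ℕ, (r n : ℝ → ℝ) =ᵐ[μ01] Rad n)

include hr in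
lemma comb_coe (s : Finset ℕ) (c : ℕ → ℝ) :
    (↑(∑ n ∈ s, c n • r n) : ℝ → ℝ) =ᵐ[μ01] fun t => ∑ n ∈ s, c n * Rad n t := by
  classical
  induction s using Finset.induction_on with
  | empty => simp only [Finset.sum_empty]; exact Lp.coeFn_zero ℝ 1 μ01
  | insert a s hx ih =>
    rw [Finset.sum_insert hx]
    filter_upwards [Lp.coeFn_add (c a • r a) (∑ n ∈ s, c n • r n),
      Lp.coeFn_smul (c a) (r a), hr a, ih] with t h1 h2 h3 h4
    rw [h1]
    simp only [Pi.add_apply]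
    rw [h2, h4, Finset.sum_insert hx]
    simp only [Pi.smul_apply, smul_eq_mul]
    rw [h3]

lemma comb_sq (s : Finset ℕ) (c : ℕ → ℝ) :
    ∫ t, (∑ n ∈ s, c n * Rad n t) ^ 2 ∂μ01 = ∑ n ∈ s, c n ^ 2 := by
  classical
  have expand : ∀ t : ℝ, (∑ n ∈ s, c n * Rad n t) ^ 2
      = ∑ n ∈ s, ∑ m ∈ s, (c n * c m) * (Rad n t * Rad m t) := by
    intro t
    rw [sq, Finset.sum_mul_sum]
    exact Finset.sum_congr rfl fun n _ => Finset.sum_congr rfl fun m _ => by ring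
  simp_rw [expand]
  have hint : ∀ n m : ℕ, Integrable (fun t => (c n * c m) * (Rad n t * Rad m t)) μ01 := by
    intro n m
    exact (integrable_mu ((Rad_measurable n).mul (Rad_measurable m)) 1 (fun t => by
      have h1 := Rad_abs_le n t; have h2 := Rad_abs_le m t
      rw [Pi.mul_apply, abs_mul]
      nlinarith [abs_nonneg (Rad n t), abs_nonneg (Rad m t)])).const_mul _
  rw [integral_finset_sum s (fun n _ => integrable_finset_sum s (fun m _ => hint n m))]
  refine Finset.sum_congr rfl fun n hn => ?_
  rw [integral_finset_sum s (fun m _ => hint n m)]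
  have : ∀ m ∈ s, ∫ t, (c n * c m) * (Rad n t * Rad m t) ∂μ01
      = (c n * c m) * (if n = m then (1:ℝ) else 0) := by
    intro m _
    rw [integral_const_mul, Rad_inner]
  rw [Finset.sum_congr rfl this, Finset.sum_eq_single n]
  · simp [sq]
  · intro m _ hne; rw [if_neg (fun h => hne h.symm), mul_zero]
  · intro h; exact absurd hn h

include hr in
lemma comb_norm (s : Finset ℕ) (c : ℕ → ℝ) :
    ‖∑ n ∈ s, c n • r n‖ ≤ Real.sqrt (∑ n ∈ s, c n ^ 2) := by
  rw [L1.norm_eq_integral_norm]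
  have heq : ∫ t, ‖(∑ n ∈ s, c n • r n : Lp ℝ 1 μ01) t‖ ∂μ01
      = ∫ t, |(∑ n ∈ s, c n * Rad n t)| ∂μ01 := by
    refine integral_congr_ae ?_
    filter_upwards [comb_coe hr s c] with t ht
    rw [Real.norm_eq_abs, ht]
  rw [heq]
  refine le_trans (cauchy_schwarz_mu
    (Finset.measurable_sum s (fun n _ => measurable_const.mul (Rad_measurable n)))
    (∑ n ∈ s, |c n|) (fun t => ?_)) ?_
  · refine le_trans (Finset.abs_sum_le_sum_abs _ _) (Finset.sum_le_sum fun n _ => ?_)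
    rw [abs_mul]
    have := Rad_abs_le n t
    nlinarith [abs_nonneg (c n)]
  · rw [comb_sq]

include hr in
lemma bessel (f : Lp ℝ 1 μ01 →L[ℝ] ℝ) :
    Tendsto (fun n => f (r n)) atTop (𝓝 0) := by
  set a : ℕ → ℝ := fun n => f (r n) with ha
  have key : ∀ s : Finset ℕ, ∑ n ∈ s, a n ^ 2 ≤ ‖f‖ ^ 2 := by
    intro s
    set S := ∑ n ∈ s, a n ^ 2 with hS
    have hS0 : 0 ≤ S := Finset.sum_nonneg fun n _ => sq_nonneg _
    have hfx : f (∑ n ∈ s, a n • r n) = S := by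
      rw [map_sum]
      exact Finset.sum_congr rfl fun n _ => by rw [f.map_smul, smul_eq_mul, ← sq]
    have h1 : S ≤ ‖f‖ * Real.sqrt S := by
      calc S = f (∑ n ∈ s, a n • r n) := hfx.symm
        _ ≤ |f (∑ n ∈ s, a n • r n)| := le_abs_self _
        _ ≤ ‖f‖ * ‖∑ n ∈ s, a n • r n‖ := f.le_opNorm _
        _ ≤ ‖f‖ * Real.sqrt S := by
            exact mul_le_mul_of_nonneg_left (comb_norm hr s a) (norm_nonneg f)
    rcases eq_or_lt_of_le hS0 with h | h
    · rw [← h]; positivity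
    · have hsq : Real.sqrt S * Real.sqrt S = S := Real.mul_self_sqrt hS0
      have h2 : Real.sqrt S ≤ ‖f‖ := by
        have hpos : 0 < Real.sqrt S := Real.sqrt_pos.mpr h
        nlinarith
      nlinarith [Real.sqrt_nonneg S]
  have hsum : Summable (fun n => a n ^ 2) :=
    summable_of_sum_range_le (fun n => sq_nonneg _) (fun n => key (Finset.range n))
  have h2 : Tendsto (fun n => a n ^ 2) atTop (𝓝 0) := hsum.tendsto_atTop_zero
  have h3 : Tendsto (fun n => |a n|) atTop (𝓝 0) := by
    have := (Real.continuous_sqrt.tendsto 0).comp h2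
    simpa [Function.comp_def, Real.sqrt_sq_eq_abs] using this
  have h4 : Tendsto a atTop (𝓝 0) := by
    refine tendsto_of_tendsto_of_tendsto_of_le_of_le (g := fun n => -|a n|) (h := fun n => |a n|)
      (by simpa using h3.neg) h3 (fun n => neg_abs_le _) (fun n => le_abs_self _)
  exact h4

include hr in
lemma r_norm_one (n : ℕ) : ‖r n‖ = 1 := by
  rw [L1.norm_eq_integral_norm, ← Rad_norm_one n]
  refine integral_congr_ae ?_
  filter_upwards [hr n] with t ht
  rw [Real.norm_eq_abs, ht]

include hr in
lemma r_dist_one {n m : ℕ} (h : n ≠ m) : ‖r n - r m‖ = 1 := by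
  rw [L1.norm_eq_integral_norm, ← Rad_dist_one h]
  refine integral_congr_ae ?_
  filter_upwards [Lp.coeFn_sub (r n) (r m), hr n, hr m] with t h1 h2 h3
  rw [Real.norm_eq_abs, h1, Pi.sub_apply, h2, h3]

end Main


/-- The set formed by the Rademacher functions together with `0` is a weakly compact subset of
`L¹[0,1]` which is not absolutely weakly sequentially compact. -/
theorem rademacher_weaklyCompact_not_absWeakSeqCompact
    (r : ℕ → Lp ℝ 1 (volume.restrict (Set.Icc (0:ℝ) 1)))
    (hr : ∀ n : ℕ, (r n : ℝ → ℝ) =ᵐ[volume.restrict (Set.Icc (0:ℝ) 1)]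
      fun t => Real.sign (Real.sin (2 ^ n * Real.pi * t))) :
    @IsCompact _ (weakTopology (Lp ℝ 1 (volume.restrict (Set.Icc (0:ℝ) 1))))
        (Set.range r ∪ {0}) ∧
      ¬ @IsSeqCompact _ (absWeakTopology (Lp ℝ 1 (volume.restrict (Set.Icc (0:ℝ) 1))))
        (Set.range r ∪ {0}) := by
  have hr' : ∀ n : ℕ, (r n : ℝ → ℝ) =ᵐ[μ01] Rad n := fun n => hr n
  constructor
  · -- weak compactness
    have ht : @Filter.Tendsto ℕ _ r atTop (@nhds _ (weakTopology (Lp ℝ 1 μ01)) 0) := by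
      rw [weakTopology, nhds_induced, Filter.tendsto_comap_iff]
      rw [tendsto_pi_nhds]
      intro f
      simpa using bessel hr' f
    have := @Filter.Tendsto.isCompact_insert_range _ (weakTopology (Lp ℝ 1 μ01)) r 0 ht
    rwa [Set.union_singleton]
  · -- not absolutely weakly sequentially compact
    intro hseq
    have hf₀ : ∀ x : Lp ℝ 1 μ01, (L1.integralCLM : Lp ℝ 1 μ01 →L[ℝ] ℝ) x = ∫ t, x t ∂μ01 :=
      fun x => by rw [← L1.integral_eq, L1.integral_eq_integral]
    have hpos : ∀ x : Lp ℝ 1 μ01, 0 ≤ x → 0 ≤ (L1.integralCLM : Lp ℝ 1 μ01 →L[ℝ] ℝ) x :=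
      fun x hx => by
        rw [hf₀]
        exact integral_nonneg_of_ae ((Lp.coeFn_nonneg x).mpr hx)
    have hdist : ∀ x y : Lp ℝ 1 μ01,
        (L1.integralCLM : Lp ℝ 1 μ01 →L[ℝ] ℝ) |x - y| = ‖x - y‖ := fun x y => by
      rw [hf₀, L1.norm_eq_integral_norm]
      refine integral_congr_ae ?_
      filter_upwards [Lp.coeFn_abs (x - y)] with t ht
      rw [ht, Real.norm_eq_abs]
    obtain ⟨a, ha, φ, hφ, hconv⟩ := hseq (x := r) (fun n => Or.inl ⟨n, rfl⟩)
    have hle : absWeakTopology (Lp ℝ 1 μ01) ≤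
        (absSeminormDist _ hpos).toUniformSpace.toTopologicalSpace :=
      iInf_le _ (⟨_, hpos⟩ : {f : Lp ℝ 1 μ01 →L[ℝ] ℝ // ∀ x, 0 ≤ x → 0 ≤ f x})
    have hconv2 : Filter.Tendsto (r ∘ φ) atTop
        (@nhds _ (absSeminormDist _ hpos).toUniformSpace.toTopologicalSpace a) :=
      hconv.mono_right (nhds_mono hle)
    have hd : Filter.Tendsto (fun k => ‖r (φ k) - a‖) atTop (𝓝 0) := by
      have := (@tendsto_iff_dist_tendsto_zero _ ℕ (absSeminormDist _ hpos) (r ∘ φ) atTop a).mp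
        hconv2
      refine this.congr fun k => ?_
      show (L1.integralCLM : Lp ℝ 1 μ01 →L[ℝ] ℝ) |r (φ k) - a| = _
      rw [hdist]
    have hone : ∀ᶠ k in atTop, ‖r (φ k) - a‖ = 1 := by
      rcases ha with ⟨m, rfl⟩ | ha
      · filter_upwards [eventually_gt_atTop m] with k hk
        have hk2 : k ≤ φ k := hφ.le_apply
        exact r_dist_one hr' (by omega)
      · rw [Set.mem_singleton_iff] at ha
        subst ha
        filter_upwards with k
        rw [sub_zero]
        exact r_norm_one hr' (φ k)
    have : Filter.Tendsto (fun _ : ℕ => (1:ℝ)) atTop (𝓝 0) :=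
      hd.congr' (hone.mono fun k hk => hk)
    exact one_ne_zero (tendsto_nhds_unique tendsto_const_nhds this)
end
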